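/- Let R be a commutative ring and A = [[a,b],[c,d]] ∈ M₂(R) a unimodular matrix. If there exists (x,y,z,w) ∈ R⁴ with ax + by + cz + dw = 1 and xw − yz = 0, then A is determinant liftable, i.e., there exists a unimodular B ∈ M₂(R) congruent to A modulo R·det(A) with det(B) = 0. -/
import Mathlib


open Matrix

theorem stmt3 {R : Type*} [CommRing R] (a b c d : R)
    (hA : Ideal.span {a, b, c, d} = (⊤ : Ideal R))
    (h : ∃ x y z w : R, a * x + b * y + c * z + d * w = 1 ∧ x * w - y * z = 0) :
    ∃ B : Matrix (Fin 2) (Fin 2) R,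
      Ideal.span {B 0 0, B 0 1, B 1 0, B 1 1} = (⊤ : Ideal R) ∧
      (∀ i j, B i j - (!![a, b; c, d] : Matrix (Fin 2) (Fin 2) R) i j ∈
        Ideal.span {a * d - b * c}) ∧
      B.det = 0 := by
  obtain ⟨x, y, z, w, h1, h2⟩ := h
  set Δ : R := a * d - b * c with hΔ
  refine ⟨!![a - Δ*w, b + Δ*z; c + Δ*y, d - Δ*x], ?_, ?_, ?_⟩
  · have hset : ({(!![a - Δ*w, b + Δ*z; c + Δ*y, d - Δ*x] : Matrix (Fin 2) (Fin 2) R) 0 0,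
        !![a - Δ*w, b + Δ*z; c + Δ*y, d - Δ*x] 0 1,
        !![a - Δ*w, b + Δ*z; c + Δ*y, d - Δ*x] 1 0,
        !![a - Δ*w, b + Δ*z; c + Δ*y, d - Δ*x] 1 1} : Set R)
        = {a - Δ*w, b + Δ*z, c + Δ*y, d - Δ*x} := by
      simp [Matrix.cons_val_zero, Matrix.cons_val_one, Matrix.head_cons]
    rw [hset]
    set I := Ideal.span ({a - Δ*w, b + Δ*z, c + Δ*y, d - Δ*x} : Set R) with hI
    have m00 : a - Δ*w ∈ I := Ideal.subset_span (by simp)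
    have m01 : b + Δ*z ∈ I := Ideal.subset_span (by simp)
    have m10 : c + Δ*y ∈ I := Ideal.subset_span (by simp)
    have m11 : d - Δ*x ∈ I := Ideal.subset_span (by simp)
    have hΔeq : Δ = d*(a - Δ*w) - c*(b + Δ*z) + (Δ*w)*(d - Δ*x) + (Δ*z)*(c + Δ*y) := by
      linear_combination Δ^2 * h2
    have hΔI : Δ ∈ I := by
      rw [hΔeq]
      exact Ideal.add_mem _ (Ideal.add_mem _
        (Ideal.sub_mem _ (Ideal.mul_mem_left _ _ m00) (Ideal.mul_mem_left _ _ m01))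
        (Ideal.mul_mem_left _ _ m11)) (Ideal.mul_mem_left _ _ m10)
    have ha : a ∈ I := by
      have : a = (a - Δ*w) + w * Δ := by ring
      rw [this]; exact Ideal.add_mem _ m00 (Ideal.mul_mem_left _ _ hΔI)
    have hb : b ∈ I := by
      have : b = (b + Δ*z) - z * Δ := by ring
      rw [this]; exact Ideal.sub_mem _ m01 (Ideal.mul_mem_left _ _ hΔI)
    have hc : c ∈ I := by
      have : c = (c + Δ*y) - y * Δ := by ring
      rw [this]; exact Ideal.sub_mem _ m10 (Ideal.mul_mem_left _ _ hΔI)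
    have hd : d ∈ I := by
      have : d = (d - Δ*x) + x * Δ := by ring
      rw [this]; exact Ideal.add_mem _ m11 (Ideal.mul_mem_left _ _ hΔI)
    have hle : Ideal.span ({a, b, c, d} : Set R) ≤ I := by
      rw [Ideal.span_le]
      rintro r hr
      simp only [Set.mem_insert_iff, Set.mem_singleton_iff] at hr
      rcases hr with rfl | rfl | rfl | rfl
      exacts [ha, hb, hc, hd]
    rw [Ideal.eq_top_iff_one]
    exact hle (hA ▸ Submodule.mem_top)
  · intro i j
    fin_cases i <;> fin_cases j <;>
      simp only [Matrix.cons_val_zero, Matrix.cons_val_one, Matrix.head_cons,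
        Matrix.cons_val', Matrix.empty_val', Matrix.cons_val_fin_one, Matrix.of_apply,
        Matrix.head_fin_const, Fin.zero_eta, Fin.mk_one] <;>
      rw [Ideal.mem_span_singleton]
    · exact ⟨-w, by ring⟩
    · exact ⟨z, by ring⟩
    · exact ⟨y, by ring⟩
    · exact ⟨-x, by ring⟩
  · rw [Matrix.det_fin_two_of, hΔ]
    linear_combination (-(a*d - b*c)) * h1 + (a*d - b*c)^2 * h2
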